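/- There exists an integer K such that for all integers k ≥ K and all integers n ≥ k³, the size of F_{k,n} satisfies n²/(4k³) ≤ |F_{k,n}| ≤ 2n²/k³. -/

import Mathlib

/-- The `k`-term arithmetic progression `{a, a+d, ..., a+(k-1)d}` as a finite set. -/
def AP (a d k : ℕ) : Finset ℕ := (Finset.range k).image (fun i => a + i * d)

/-- `Fkn k n` is the family of `k`-term arithmetic progressions contained in
`{1, ..., n}` whose common difference `d` satisfies `n/k ≤ d < n/(k-1)`. -/
noncomputable def Fkn (k n : ℕ) : Finset (Finset ℕ) :=
  ((Finset.Icc 1 n ×ˢ Finset.Icc 1 n).filter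
      (fun p => p.1 + (k - 1) * p.2 ≤ n ∧ (n : ℝ) / (k : ℝ) ≤ (p.2 : ℝ) ∧
        (p.2 : ℝ) < (n : ℝ) / ((k : ℝ) - 1))).image (fun p => AP p.1 p.2 k)

lemma mem_AP_self (a d k : ℕ) (hk : 0 < k) : a ∈ AP a d k :=
  Finset.mem_image.mpr ⟨0, Finset.mem_range.mpr hk, by simp⟩

lemma mem_AP_last (a d k : ℕ) (hk : 0 < k) : a + (k - 1) * d ∈ AP a d k :=
  Finset.mem_image.mpr ⟨k - 1, Finset.mem_range.mpr (by omega), rfl⟩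

lemma AP_bounds {x a d k : ℕ} (hx : x ∈ AP a d k) : a ≤ x ∧ x ≤ a + (k - 1) * d := by
  rw [AP, Finset.mem_image] at hx
  obtain ⟨i, hi, rfl⟩ := hx
  rw [Finset.mem_range] at hi
  refine ⟨Nat.le_add_right _ _, ?_⟩
  gcongr
  omega

lemma AP_inj {k : ℕ} (hk : 2 ≤ k) {a d a' d' : ℕ} (h : AP a d k = AP a' d' k) :
    a = a' ∧ d = d' := by
  have hk0 : 0 < k := by omega
  have h1 := AP_bounds (h ▸ mem_AP_self a d k hk0)
  have h2 := AP_bounds (h.symm ▸ mem_AP_self a' d' k hk0)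
  have h3 := AP_bounds (h ▸ mem_AP_last a d k hk0)
  have h4 := AP_bounds (h.symm ▸ mem_AP_last a' d' k hk0)
  have ha : a = a' := le_antisymm h2.1 h1.1
  subst ha
  have e1 : a + (k-1)*d ≤ a + (k-1)*d' := h3.2
  have e2 : a + (k-1)*d' ≤ a + (k-1)*d := h4.2
  have hdd : (k-1)*d = (k-1)*d' :=
    le_antisymm (Nat.le_of_add_le_add_left e1) (Nat.le_of_add_le_add_left e2)
  exact ⟨rfl, Nat.eq_of_mul_eq_mul_left (by omega) hdd⟩

set_option maxHeartbeats 2000000 in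
/-- For all large `k` and all `n ≥ k³`, `n²/(4k³) ≤ |F_{k,n}| ≤ 2n²/k³`. -/
theorem card_Fkn_bounds :
    ∃ K : ℕ, ∀ k : ℕ, K ≤ k → ∀ n : ℕ, k ^ 3 ≤ n →
      (n : ℝ) ^ 2 / (4 * (k : ℝ) ^ 3) ≤ ((Fkn k n).card : ℝ) ∧
        ((Fkn k n).card : ℝ) ≤ 2 * (n : ℝ) ^ 2 / (k : ℝ) ^ 3 := by
  refine ⟨16, fun k hk n hn => ?_⟩
  have hk2 : 2 ≤ k := by omega
  have hk0 : 0 < k := by omega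
  have hkn : k ≤ n := le_trans (Nat.le_self_pow (by norm_num) k) hn
  have hn1 : 1 ≤ n := by omega
  have hy : (16:ℝ) ≤ (k:ℝ) := by exact_mod_cast hk
  have hx : (k:ℝ)^3 ≤ (n:ℝ) := by exact_mod_cast hn
  have hy0 : (0:ℝ) < (k:ℝ) := by linarith
  have hy1 : (0:ℝ) < (k:ℝ) - 1 := by linarith
  have hx0 : (0:ℝ) < (n:ℝ) := by
    have h : (0:ℕ) < n := hn1
    exact_mod_cast h
  have hky : ((k-1:ℕ):ℝ) = (k:ℝ) - 1 := by
    rw [Nat.cast_sub (by omega)]; norm_num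
  have cond1 : ∀ d : ℕ, ((n:ℝ)/(k:ℝ) ≤ (d:ℝ) ↔ n ≤ k*d) := by
    intro d
    rw [div_le_iff₀ hy0, mul_comm]
    exact_mod_cast Iff.rfl
  have cond2 : ∀ d : ℕ, ((d:ℝ) < (n:ℝ)/((k:ℝ)-1) ↔ (k-1)*d < n) := by
    intro d
    rw [lt_div_iff₀ hy1, ← hky, mul_comm]
    exact_mod_cast Iff.rfl
  set c := n / k with hc
  set b := (n-1)/(k-1) with hb
  set A := n - (k-1)*c with hA
  -- basic nat facts
  have hck : k * c ≤ n := by rw [hc, mul_comm]; exact Nat.div_mul_le_self n k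
  have hck2 : n < k * c + k := by
    conv_lhs => rw [← Nat.div_add_mod n k]
    exact Nat.add_lt_add_left (Nat.mod_lt n hk0) _
  have hkc : (k-1)*c ≤ n := le_trans (Nat.mul_le_mul_right c (by omega)) hck
  have hc1 : 1 ≤ c := (Nat.one_le_div_iff hk0).mpr hkn
  have hcb : c ≤ b := by
    rw [hb, Nat.le_div_iff_mul_le (by omega : 0 < k - 1)]
    have e : c*(k-1) + c = c*k := by
      rw [← Nat.mul_succ]; congr 1; omega
    have h1 : c*(k-1) + 1 ≤ n := by
      calc c*(k-1) + 1 ≤ c*(k-1) + c := Nat.add_le_add_left hc1 _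
      _ = c * k := e
      _ ≤ n := by rwa [mul_comm]
    exact Nat.le_sub_of_add_le h1
  have hbk : b*(k-1) ≤ n-1 := Nat.div_mul_le_self (n-1) (k-1)
  -- real versions
  have hr1 : (k:ℝ) * (c:ℝ) ≤ (n:ℝ) := by exact_mod_cast hck
  have hr2 : (n:ℝ) < (k:ℝ) * (c:ℝ) + (k:ℝ) := by exact_mod_cast hck2
  have hs1 : (b:ℝ)*((k:ℝ)-1) ≤ (n:ℝ) - 1 := by
    rw [← hky]
    calc (b:ℝ) * ((k-1:ℕ):ℝ) = ((b*(k-1) : ℕ):ℝ) := by push_cast; ring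
    _ ≤ ((n-1:ℕ):ℝ) := by exact_mod_cast hbk
    _ = (n:ℝ) - 1 := by rw [Nat.cast_sub hn1]; norm_num
  have hAx : ((A:ℕ):ℝ) = (n:ℝ) - ((k:ℝ)-1)*(c:ℝ) := by
    rw [hA, Nat.cast_sub hkc, Nat.cast_mul, hky]
  have hA_n : A ≤ n := by rw [hA]; exact Nat.sub_le _ _
  constructor
  · -- LOWER BOUND
    set m := (A + (k-1)) / (2*(k-1)) with hm
    have h2k1 : 0 < 2*(k-1) := by omega
    have hm1 : 2*(k-1)*m ≤ A + (k-1) := by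
      rw [hm, mul_comm]
      exact Nat.div_mul_le_self _ _
    have hm2 : A + (k-1) < 2*(k-1)*m + 2*(k-1) := by
      rw [hm]
      conv_lhs => rw [← Nat.div_add_mod (A + (k-1)) (2*(k-1))]
      exact Nat.add_lt_add_left (Nat.mod_lt _ h2k1) _
    have hμ1 : 2*((k:ℝ)-1)*((m:ℕ):ℝ) ≤ ((A:ℕ):ℝ) + ((k:ℝ)-1) := by
      rw [← hky]
      exact_mod_cast hm1
    have hμ2 : ((A:ℕ):ℝ) + ((k:ℝ)-1) < 2*((k:ℝ)-1)*((m:ℕ):ℝ) + 2*((k:ℝ)-1) := by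
      rw [← hky]
      exact_mod_cast hm2
    have hya : (n:ℝ) ≤ (k:ℝ)*((A:ℕ):ℝ) := by
      rw [hAx]
      nlinarith [mul_nonneg hy1.le (sub_nonneg.mpr hr1)]
    have haY2 : (k:ℝ)^2 ≤ ((A:ℕ):ℝ) := by nlinarith [hya, hy0, hx, hy]
    have hkA : k - 1 ≤ A := by
      have h : ((k-1:ℕ):ℝ) ≤ ((A:ℕ):ℝ) := by rw [hky]; nlinarith
      exact_mod_cast h
    have hkm : (k-1)*m ≤ A := by
      have h : 2*((k-1)*m) ≤ 2*A := by
        calc 2*((k-1)*m) = 2*(k-1)*m := by ring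
        _ ≤ A + (k-1) := hm1
        _ ≤ A + A := Nat.add_le_add_left hkA A
        _ = 2*A := by ring
      exact Nat.le_of_mul_le_mul_left h (by omega)
    set A' := A - (k-1)*m with hA'
    have hA'x : ((A':ℕ):ℝ) = ((A:ℕ):ℝ) - ((k:ℝ)-1)*((m:ℕ):ℝ) := by
      rw [hA', Nat.cast_sub hkm, Nat.cast_mul, hky]
    have hq : (k:ℝ) + 1 ≤ (k:ℝ)^2 := by nlinarith
    have hA'1 : 1 ≤ A' := by
      have hreal : (1:ℝ) ≤ ((A':ℕ):ℝ) := by rw [hA'x]; linarith [hμ1, haY2, hq]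
      exact_mod_cast hreal
    have hm0 : 1 ≤ m := by
      have hpos : (0:ℝ) < 2*((k:ℝ)-1)*((m:ℕ):ℝ) := by linarith [hμ2, haY2, hq]
      have hreal : (0:ℝ) < ((m:ℕ):ℝ) := by nlinarith [hpos, hy1]
      have : 0 < m := by exact_mod_cast hreal
      omega
    have hm_le : m ≤ A := le_trans (Nat.le_mul_of_pos_left m (by omega : 0 < k - 1)) hkm
    have hc_le : c ≤ (k-1)*c := Nat.le_mul_of_pos_left c (by omega)
    have hcm_n : c + m ≤ n := by
      have h1 : m ≤ n - c := le_trans hm_le (by rw [hA]; exact Nat.sub_le_sub_left hc_le n)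
      have h2 : c ≤ n := Nat.div_le_self n k
      omega
    have hA'_A : A' ≤ A := by rw [hA']; exact Nat.sub_le _ _
    have hsubR : (Finset.Icc 1 A' ×ˢ Finset.Icc (c+1) (c+m)) ⊆
        ((Finset.Icc 1 n ×ˢ Finset.Icc 1 n).filter
          (fun p => p.1 + (k - 1) * p.2 ≤ n ∧ (n : ℝ) / (k : ℝ) ≤ (p.2 : ℝ) ∧
            (p.2 : ℝ) < (n : ℝ) / ((k : ℝ) - 1))) := by
      rintro ⟨a0, d0⟩ hp
      simp only [Finset.mem_product, Finset.mem_Icc, Finset.mem_filter] at hp ⊢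
      obtain ⟨⟨ha1, ha2⟩, ⟨hd1, hd2⟩⟩ := hp
      have e1 : A' + (k-1)*m = A := Nat.sub_add_cancel hkm
      have e2 : A + (k-1)*c = n := Nat.sub_add_cancel hkc
      have hw : (k-1)*d0 ≤ (k-1)*c + (k-1)*m := by
        calc (k-1)*d0 ≤ (k-1)*(c+m) := Nat.mul_le_mul_left _ hd2
        _ = (k-1)*c + (k-1)*m := Nat.mul_add _ _ _
      have hsum : a0 + (k-1)*d0 ≤ n := by
        calc a0 + (k-1)*d0 ≤ A' + ((k-1)*c + (k-1)*m) := Nat.add_le_add ha2 hw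
        _ = (A' + (k-1)*m) + (k-1)*c := by ring
        _ = A + (k-1)*c := by rw [e1]
        _ = n := e2
      have h0 : 0 < A - (k-1)*m := by rw [← hA']; omega
      have hklt : (k-1)*m < A := tsub_pos_iff_lt.mp h0
      have hhi : (k-1)*d0 < n := by
        calc (k-1)*d0 ≤ (k-1)*c + (k-1)*m := hw
        _ < (k-1)*c + A := Nat.add_lt_add_left hklt _
        _ = n := by rw [add_comm]; exact e2
      have hlo : n ≤ k*d0 := by
        calc n ≤ k*c + k := le_of_lt hck2
        _ = k*(c+1) := by ring
        _ ≤ k*d0 := Nat.mul_le_mul_left _ hd1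
      refine ⟨⟨⟨ha1, le_trans ha2 (le_trans hA'_A hA_n)⟩, by omega, by omega⟩,
        hsum, (cond1 d0).mpr hlo, (cond2 d0).mpr hhi⟩
    have hinj : Set.InjOn (fun p : ℕ × ℕ => AP p.1 p.2 k)
        ↑(Finset.Icc 1 A' ×ˢ Finset.Icc (c+1) (c+m)) := by
      intro p _ q _ hpq
      have h := AP_inj hk2 hpq
      exact Prod.ext h.1 h.2
    have hcard_ge : A' * m ≤ (Fkn k n).card := by
      rw [Fkn]
      calc A' * m = (Finset.Icc 1 A' ×ˢ Finset.Icc (c+1) (c+m)).card := by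
            rw [Finset.card_product, Nat.card_Icc, Nat.card_Icc]
            have e3 : A' + 1 - 1 = A' := by omega
            have e4 : c + m + 1 - (c + 1) = m := by omega
            rw [e3, e4]
      _ = ((Finset.Icc 1 A' ×ˢ Finset.Icc (c+1) (c+m)).image (fun p => AP p.1 p.2 k)).card :=
            (Finset.card_image_of_injOn hinj).symm
      _ ≤ _ := Finset.card_le_card (Finset.image_subset_image hsubR)
    have hFcast : (((A:ℕ):ℝ) - ((k:ℝ)-1)*((m:ℕ):ℝ)) * ((m:ℕ):ℝ) ≤ ((Fkn k n).card:ℝ) := by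
      calc (((A:ℕ):ℝ) - ((k:ℝ)-1)*((m:ℕ):ℝ)) * ((m:ℕ):ℝ) = ((A' * m : ℕ):ℝ) := by
            rw [Nat.cast_mul, hA'x]
      _ ≤ _ := by exact_mod_cast hcard_ge
    -- final real arithmetic for the lower bound
    rw [div_le_iff₀ (by positivity : (0:ℝ) < 4*(k:ℝ)^3)]
    have g1 : (0:ℝ) ≤ ((A:ℕ):ℝ) + ((k:ℝ)-1) - 2*((k:ℝ)-1)*((m:ℕ):ℝ) := by linarith
    have g2 : (0:ℝ) ≤ 2*((k:ℝ)-1)*((m:ℕ):ℝ) + ((k:ℝ)-1) - ((A:ℕ):ℝ) := by linarith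
    have hsq : (n:ℝ)*(n:ℝ) ≤ ((k:ℝ)*((A:ℕ):ℝ))*((k:ℝ)*((A:ℕ):ℝ)) :=
      mul_self_le_mul_self hx0.le hya
    have hy5 : (k:ℝ)^3*((k:ℝ)-1)^2 ≤ (n:ℝ)^2 := by
      have q1 : ((k:ℝ)-1)^2 ≤ (k:ℝ)^2 := by nlinarith
      have q2 : (k:ℝ)^3*((k:ℝ)-1)^2 ≤ (k:ℝ)^3*(k:ℝ)^2 :=
        mul_le_mul_of_nonneg_left q1 (by positivity)
      have q3 : (0:ℝ) ≤ (k:ℝ)^5*((k:ℝ)-1) := mul_nonneg (by positivity) hy1.le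
      have q4 : (k:ℝ)^3*(k:ℝ)^3 ≤ (n:ℝ)*(n:ℝ) := mul_le_mul hx hx (by positivity) hx0.le
      nlinarith [q2, q3, q4]
    have T1 : (0:ℝ) ≤ (k:ℝ)^3 * ((((A:ℕ):ℝ) + ((k:ℝ)-1) - 2*((k:ℝ)-1)*((m:ℕ):ℝ)) *
        (2*((k:ℝ)-1)*((m:ℕ):ℝ) + ((k:ℝ)-1) - ((A:ℕ):ℝ))) :=
      mul_nonneg (by positivity) (mul_nonneg g1 g2)
    have T2 : (k:ℝ)*((n:ℝ)*(n:ℝ)) ≤ (k:ℝ)*(((k:ℝ)*((A:ℕ):ℝ))*((k:ℝ)*((A:ℕ):ℝ))) :=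
      mul_le_mul_of_nonneg_left hsq hy0.le
    have T4c : (0:ℝ) ≤ 4*(k:ℝ)^3*((k:ℝ)-1) :=
      mul_nonneg (by positivity) hy1.le
    have T4 : 4*(k:ℝ)^3*((k:ℝ)-1)*((((A:ℕ):ℝ) - ((k:ℝ)-1)*((m:ℕ):ℝ)) * ((m:ℕ):ℝ))
        ≤ 4*(k:ℝ)^3*((k:ℝ)-1)*((Fkn k n).card:ℝ) :=
      mul_le_mul_of_nonneg_left hFcast T4c
    nlinarith [T1, T2, T4, hy5, hy1]
  · -- UPPER BOUND
    have hcards : (Fkn k n).card ≤ A * (b + 1 - c) := by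
      rw [Fkn]
      refine le_trans Finset.card_image_le ?_
      have hsub : ((Finset.Icc 1 n ×ˢ Finset.Icc 1 n).filter
          (fun p => p.1 + (k - 1) * p.2 ≤ n ∧ (n : ℝ) / (k : ℝ) ≤ (p.2 : ℝ) ∧
            (p.2 : ℝ) < (n : ℝ) / ((k : ℝ) - 1))) ⊆ Finset.Icc 1 A ×ˢ Finset.Icc c b := by
        rintro ⟨a0, d0⟩ hp
        simp only [Finset.mem_filter, Finset.mem_product, Finset.mem_Icc] at hp ⊢
        obtain ⟨⟨⟨ha1, _⟩, ⟨hd1, _⟩⟩, hsum, hlo, hhi⟩ := hp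
        have hlo' : n ≤ k*d0 := (cond1 d0).mp hlo
        have hhi' : (k-1)*d0 < n := (cond2 d0).mp hhi
        have hcd : c ≤ d0 := by
          have h := Nat.div_le_div_right (c := k) hlo'
          rwa [Nat.mul_div_cancel_left d0 hk0] at h
        have hdb : d0 ≤ b := by
          rw [hb, Nat.le_div_iff_mul_le (by omega : 0 < k - 1)]
          exact Nat.le_sub_of_add_le (by rw [mul_comm]; omega)
        have h5 : (k-1)*c ≤ (k-1)*d0 := Nat.mul_le_mul_left _ hcd
        exact ⟨⟨ha1, Nat.le_sub_of_add_le (le_trans (Nat.add_le_add_left h5 a0) hsum)⟩, hcd, hdb⟩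
      refine le_trans (Finset.card_le_card hsub) ?_
      rw [Finset.card_product, Nat.card_Icc, Nat.card_Icc, Nat.add_sub_cancel]
    have hDx : ((b+1-c:ℕ):ℝ) = (b:ℝ) + 1 - (c:ℝ) := by
      rw [Nat.cast_sub (by omega)]; push_cast; ring
    have key : ((Fkn k n).card : ℝ) ≤ ((n:ℝ) - ((k:ℝ)-1)*(c:ℝ)) * ((b:ℝ)+1-(c:ℝ)) := by
      calc ((Fkn k n).card : ℝ) ≤ ((A*(b+1-c) : ℕ) : ℝ) := by exact_mod_cast hcards
      _ = _ := by rw [Nat.cast_mul, hAx, hDx]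
    have hA0 : (0:ℝ) ≤ (n:ℝ) - ((k:ℝ)-1)*(c:ℝ) := by rw [← hAx]; exact Nat.cast_nonneg A
    have hD0 : (0:ℝ) ≤ (b:ℝ) + 1 - (c:ℝ) := by rw [← hDx]; exact Nat.cast_nonneg _
    have hA1 : (k:ℝ)*((n:ℝ) - ((k:ℝ)-1)*(c:ℝ)) ≤ (n:ℝ) + (k:ℝ)^2 := by
      nlinarith [mul_lt_mul_of_pos_left hr2 hy1]
    have hD1 : ((k:ℝ)^2 - (k:ℝ))*((b:ℝ)+1-(c:ℝ)) ≤ (n:ℝ) + 2*(k:ℝ)^2 := by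
      nlinarith [mul_lt_mul_of_pos_left hr2 hy1, mul_le_mul_of_nonneg_left hs1 hy0.le]
    have hE0 : (0:ℝ) ≤ ((n:ℝ) - ((k:ℝ)-1)*(c:ℝ)) * ((b:ℝ)+1-(c:ℝ)) := mul_nonneg hA0 hD0
    have hprod2 : ((k:ℝ)*((k:ℝ)^2-(k:ℝ))) * (((n:ℝ) - ((k:ℝ)-1)*(c:ℝ)) * ((b:ℝ)+1-(c:ℝ)))
        ≤ ((n:ℝ) + (k:ℝ)^2) * ((n:ℝ) + 2*(k:ℝ)^2) := by
      calc ((k:ℝ)*((k:ℝ)^2-(k:ℝ))) * (((n:ℝ) - ((k:ℝ)-1)*(c:ℝ)) * ((b:ℝ)+1-(c:ℝ)))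
          = ((k:ℝ)*((n:ℝ) - ((k:ℝ)-1)*(c:ℝ))) * (((k:ℝ)^2-(k:ℝ))*((b:ℝ)+1-(c:ℝ))) := by ring
      _ ≤ _ := mul_le_mul hA1 hD1
            (mul_nonneg (by nlinarith : (0:ℝ) ≤ (k:ℝ)^2 - (k:ℝ)) hD0) (by positivity)
    have hP2 : ((n:ℝ) + (k:ℝ)^2) * ((n:ℝ) + 2*(k:ℝ)^2) * (k:ℝ) ≤ 2*(n:ℝ)^2*((k:ℝ)-1) := by
      have hYY : 16*(k:ℝ) ≤ (k:ℝ)^2 := by nlinarith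
      have hY3 : 16*(k:ℝ)^2 ≤ (k:ℝ)^3 := by nlinarith [mul_le_mul_of_nonneg_left hYY hy0.le]
      have hX0 : (0:ℝ) ≤ (n:ℝ) := hx0.le
      have p1 : (n:ℝ)*(k:ℝ)^3 ≤ (n:ℝ)*(n:ℝ) := mul_le_mul_of_nonneg_left hx hX0
      have p2 : (k:ℝ)^3*(k:ℝ)^3 ≤ (n:ℝ)*(n:ℝ) := mul_le_mul hx hx (by positivity) hX0
      have p3 : (k:ℝ)^5 ≤ (k:ℝ)^3*(k:ℝ)^3 := by
        nlinarith [mul_nonneg (pow_nonneg hy0.le 5) (by linarith : (0:ℝ) ≤ (k:ℝ) - 1)]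
      have p4 : 16*(n:ℝ)^2 ≤ (n:ℝ)^2*(k:ℝ) := by
        nlinarith [mul_le_mul_of_nonneg_left hy (sq_nonneg (n:ℝ))]
      nlinarith [p1, p2, p3, p4]
    rw [le_div_iff₀ (by positivity : (0:ℝ) < (k:ℝ)^3)]
    have T : ((Fkn k n).card:ℝ) * (k:ℝ)^3
        ≤ ((n:ℝ) - ((k:ℝ)-1)*(c:ℝ)) * ((b:ℝ)+1-(c:ℝ)) * (k:ℝ)^3 :=
      mul_le_mul_of_nonneg_right key (by positivity)
    nlinarith [mul_le_mul_of_nonneg_left hprod2 hy0.le, hy1, hE0, T]
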